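/- For every n ≥ 2 there exists a Lebesgue-measurable subset S of the closed unit ball in ℝⁿ such that no two points of S are at Euclidean distance exactly 1 and vol(S) > (1/2)ⁿ · vol(Bₙ). -/

import Mathlib

open MeasureTheory Metric
namespace LR14
noncomputable def aa : ℝ := (1 + Real.sqrt 10) / 6
noncomputable def dd : ℝ := (Real.sqrt 10 - 2) / 6
lemma sqrt10_sq : Real.sqrt 10 ^ 2 = 10 := Real.sq_sqrt (by norm_num)
lemma sqrt10_gt : 3 < Real.sqrt 10 := by nlinarith [sqrt10_sq, Real.sqrt_nonneg 10]
lemma sqrt10_lt : Real.sqrt 10 < 3.5 := by nlinarith [sqrt10_sq, Real.sqrt_nonneg 10]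
lemma dd_pos : 0 < dd := by unfold dd; nlinarith [sqrt10_gt]
lemma dd_lt_half : dd < 1/2 := by unfold dd; nlinarith [sqrt10_lt]
lemma aa_eq : aa = dd + 1/2 := by unfold aa dd; ring
lemma key : aa^2 + 2*aa*dd = 3/4 := by unfold aa dd; nlinarith [sqrt10_sq]
lemma aa_dd_le_one : aa + dd ≤ 1 := by unfold aa dd; nlinarith [sqrt10_lt]

section
variable {n : ℕ} (i0 : Fin n)
def sq (x : EuclideanSpace ℝ (Fin n)) : ℝ := ∑ i ∈ Finset.univ.erase i0, x i ^ 2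
lemma sq_nonneg' (x : EuclideanSpace ℝ (Fin n)) : 0 ≤ sq i0 x :=
  Finset.sum_nonneg fun i _ => _root_.sq_nonneg _

/-- the basic cap -/
def TT : Set (EuclideanSpace ℝ (Fin n)) :=
  {x | 1/2 < x i0 ∧ (x i0 - aa)^2 + sq i0 x < 1/4 ∧ (x i0)^2 + sq i0 x < 1}

def PP : Set (EuclideanSpace ℝ (Fin n)) :=
  {x | 0 < x i0 ∧ x i0 < dd ∧ (x i0)^2 + sq i0 x < 1/4}
def QQ : Set (EuclideanSpace ℝ (Fin n)) :=
  {x | dd < x i0 ∧ x i0 < 2*dd ∧ (x i0)^2 + sq i0 x < 1/4}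
def RR : Set (EuclideanSpace ℝ (Fin n)) :=
  {x | 2*dd ≤ x i0 ∧ (x i0)^2 + sq i0 x < 1/4}
def Bh : Set (EuclideanSpace ℝ (Fin n)) :=
  {x | 0 < x i0 ∧ (x i0)^2 + sq i0 x < 1/4}
def Bb : Set (EuclideanSpace ℝ (Fin n)) :=
  {x | (x i0)^2 + sq i0 x < 1/4}
def EE : Set (EuclideanSpace ℝ (Fin n)) :=
  {y | 1/2 < y i0 ∧ y i0 < aa ∧ (y i0 - aa)^2 + sq i0 y < 1/4 ∧
       1/4 ≤ (aa + dd - y i0)^2 + sq i0 y}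

noncomputable def I₁ : Set (EuclideanSpace ℝ (Fin n)) :=
  (fun y => y + EuclideanSpace.single i0 (-aa)) ⁻¹' PP i0
noncomputable def KK : Set (EuclideanSpace ℝ (Fin n)) :=
  (fun y => EuclideanSpace.single i0 (aa + dd) + -y) ⁻¹' QQ i0
noncomputable def I₃ : Set (EuclideanSpace ℝ (Fin n)) :=
  (fun y => y + EuclideanSpace.single i0 (-(1/2))) ⁻¹' RR i0

lemma sq_add_single (x : EuclideanSpace ℝ (Fin n)) (c : ℝ) :
    sq i0 (x + EuclideanSpace.single i0 c) = sq i0 x := by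
  unfold sq
  refine Finset.sum_congr rfl fun i hi => ?_
  have : i ≠ i0 := Finset.ne_of_mem_erase hi
  simp [EuclideanSpace.single_apply, this]

lemma sq_single_sub (x : EuclideanSpace ℝ (Fin n)) (c : ℝ) :
    sq i0 (EuclideanSpace.single i0 c - x) = sq i0 x := by
  unfold sq
  refine Finset.sum_congr rfl fun i hi => ?_
  have : i ≠ i0 := Finset.ne_of_mem_erase hi
  simp [EuclideanSpace.single_apply, this]

lemma mem_I₁ (y : EuclideanSpace ℝ (Fin n)) :
    y ∈ I₁ i0 ↔ aa < y i0 ∧ y i0 < aa + dd ∧ (y i0 - aa)^2 + sq i0 y < 1/4 := by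
  simp only [I₁, Set.mem_preimage, PP, Set.mem_setOf_eq, sq_add_single,
    PiLp.add_apply, EuclideanSpace.single_apply, if_pos rfl, if_true, ← sub_eq_add_neg]
  constructor <;> rintro ⟨h1, h2, h3⟩ <;> exact ⟨by linarith, by linarith, h3⟩

lemma mem_KK (y : EuclideanSpace ℝ (Fin n)) :
    y ∈ KK i0 ↔ aa - dd < y i0 ∧ y i0 < aa ∧ (aa + dd - y i0)^2 + sq i0 y < 1/4 := by
  simp only [KK, Set.mem_preimage, ← sub_eq_add_neg, QQ, Set.mem_setOf_eq, sq_single_sub,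
    PiLp.sub_apply, EuclideanSpace.single_apply, if_pos rfl, if_true]
  constructor <;> rintro ⟨h1, h2, h3⟩ <;> exact ⟨by linarith, by linarith, h3⟩

lemma mem_I₃ (y : EuclideanSpace ℝ (Fin n)) :
    y ∈ I₃ i0 ↔ 2*dd ≤ y i0 - 1/2 ∧ (y i0 - 1/2)^2 + sq i0 y < 1/4 := by
  simp only [I₃, Set.mem_preimage, RR, Set.mem_setOf_eq, sq_add_single,
    PiLp.add_apply, EuclideanSpace.single_apply, if_pos rfl, if_true, ← sub_eq_add_neg]

lemma I₁_subset : I₁ i0 ⊆ TT i0 := by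
  intro y hy
  rw [mem_I₁] at hy
  obtain ⟨h1, h2, h3⟩ := hy
  have hs := sq_nonneg' i0 y
  have hd := dd_pos
  have hk := key
  have ha := aa_eq
  refine ⟨by linarith, h3, ?_⟩
  nlinarith

lemma KK_subset : KK i0 ⊆ TT i0 := by
  intro y hy
  rw [mem_KK] at hy
  obtain ⟨h1, h2, h3⟩ := hy
  have hs := sq_nonneg' i0 y
  have hd := dd_pos
  have hk := key
  have ha := aa_eq
  have hb : (y i0 - aa)^2 + sq i0 y < 1/4 := by nlinarith
  refine ⟨by linarith, hb, ?_⟩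
  nlinarith

lemma I₃_subset : I₃ i0 ⊆ TT i0 := by
  intro y hy
  rw [mem_I₃] at hy
  obtain ⟨h1, h2⟩ := hy
  have hs := sq_nonneg' i0 y
  have hd := dd_pos
  have hk := key
  have ha := aa_eq
  have hx : y i0 - 1/2 < 1/2 := by nlinarith
  refine ⟨by linarith, ?_, ?_⟩
  · have : (y i0 - aa)^2 ≤ (y i0 - 1/2 - dd)^2 := by nlinarith [aa_eq]
    nlinarith
  · nlinarith

lemma EE_subset : EE i0 ⊆ TT i0 := by
  intro y hy
  obtain ⟨h1, h2, h3, _⟩ := hy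
  have hs := sq_nonneg' i0 y
  have hd := dd_pos
  have hk := key
  have ha := aa_eq
  refine ⟨h1, h3, ?_⟩
  nlinarith

lemma sq_neg (x : EuclideanSpace ℝ (Fin n)) : sq i0 (-x) = sq i0 x := by
  unfold sq; exact Finset.sum_congr rfl fun i _ => by simp

lemma measurable_sq : Measurable (sq (n := n) i0) :=
  Finset.measurable_sum _ fun i _ => ((measurable_pi_apply i).comp (WithLp.measurable_ofLp _ _)).pow_const 2

lemma continuous_sq : Continuous (sq (n := n) i0) :=
  continuous_finset_sum _ fun i _ => ((EuclideanSpace.proj (𝕜 := ℝ) i).continuous).pow 2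

lemma norm_sq_eq (x : EuclideanSpace ℝ (Fin n)) : ‖x‖^2 = x i0 ^ 2 + sq i0 x := by
  rw [EuclideanSpace.norm_eq, Real.sq_sqrt (by positivity)]
  rw [← Finset.add_sum_erase _ _ (Finset.mem_univ i0)]
  simp [sq, Real.norm_eq_abs, sq_abs]

lemma norm_sub_single_sq (x : EuclideanSpace ℝ (Fin n)) (c : ℝ) :
    ‖x - EuclideanSpace.single i0 c‖^2 = (x i0 - c)^2 + sq i0 x := by
  rw [norm_sq_eq i0]
  have h1 : (x - EuclideanSpace.single i0 c) i0 = x i0 - c := by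
    simp [EuclideanSpace.single_apply]
  have h2 : sq i0 (x - EuclideanSpace.single i0 c) = sq i0 x := by
    unfold sq
    refine Finset.sum_congr rfl fun i hi => ?_
    have : i ≠ i0 := Finset.ne_of_mem_erase hi
    simp [EuclideanSpace.single_apply, this]
  rw [h1, h2]

lemma coord_dist (x y : EuclideanSpace ℝ (Fin n)) : |x i0 - y i0| ≤ dist x y := by
  rw [EuclideanSpace.dist_eq, ← Real.sqrt_sq_eq_abs]
  apply Real.sqrt_le_sqrt
  have h0 : (x i0 - y i0)^2 = dist (x i0) (y i0)^2 := by
    rw [Real.dist_eq, sq_abs]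
  rw [h0]
  exact Finset.single_le_sum (f := fun i => dist (x i) (y i)^2) (fun i _ => sq_nonneg _)
    (Finset.mem_univ i0)

-- measurability
lemma meas_TT : MeasurableSet (TT i0) := by
  have m1 : Measurable fun x : EuclideanSpace ℝ (Fin n) => x i0 := (measurable_pi_apply i0).comp (WithLp.measurable_ofLp _ _)
  have m2 := measurable_sq i0
  exact (measurableSet_lt measurable_const m1).inter
    ((measurableSet_lt ((((m1.sub_const aa).pow_const 2)).add m2) measurable_const).inter
      (measurableSet_lt ((m1.pow_const 2).add m2) measurable_const))

lemma meas_PP : MeasurableSet (PP i0) := by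
  have m1 : Measurable fun x : EuclideanSpace ℝ (Fin n) => x i0 := (measurable_pi_apply i0).comp (WithLp.measurable_ofLp _ _)
  have m2 := measurable_sq i0
  exact (measurableSet_lt measurable_const m1).inter
    ((measurableSet_lt m1 measurable_const).inter
      (measurableSet_lt ((m1.pow_const 2).add m2) measurable_const))

lemma meas_QQ : MeasurableSet (QQ i0) := by
  have m1 : Measurable fun x : EuclideanSpace ℝ (Fin n) => x i0 := (measurable_pi_apply i0).comp (WithLp.measurable_ofLp _ _)
  have m2 := measurable_sq i0
  exact (measurableSet_lt measurable_const m1).inter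
    ((measurableSet_lt m1 measurable_const).inter
      (measurableSet_lt ((m1.pow_const 2).add m2) measurable_const))

lemma meas_RR : MeasurableSet (RR i0) := by
  have m1 : Measurable fun x : EuclideanSpace ℝ (Fin n) => x i0 := (measurable_pi_apply i0).comp (WithLp.measurable_ofLp _ _)
  have m2 := measurable_sq i0
  exact (measurableSet_le measurable_const m1).inter
    (measurableSet_lt ((m1.pow_const 2).add m2) measurable_const)

lemma meas_EE : MeasurableSet (EE i0) := by
  have m1 : Measurable fun x : EuclideanSpace ℝ (Fin n) => x i0 := (measurable_pi_apply i0).comp (WithLp.measurable_ofLp _ _)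
  have m2 := measurable_sq i0
  exact (measurableSet_lt measurable_const m1).inter
    ((measurableSet_lt m1 measurable_const).inter
      ((measurableSet_lt ((((m1.sub_const aa).pow_const 2)).add m2) measurable_const).inter
        (measurableSet_le measurable_const
          ((((measurable_const.sub m1).pow_const 2)).add m2))))

lemma meas_I₁ : MeasurableSet (I₁ i0) :=
  (meas_PP i0).preimage (measurable_id.add_const _)
lemma meas_KK : MeasurableSet (KK i0) :=
  (meas_QQ i0).preimage (measurable_const.add measurable_neg)
lemma meas_I₃ : MeasurableSet (I₃ i0) :=
  (meas_RR i0).preimage (measurable_id.add_const _)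

-- volumes of the moved pieces
lemma vol_I₁ : volume (I₁ i0) = volume (PP i0) :=
  measure_preimage_add_right volume _ _
lemma vol_I₃ : volume (I₃ i0) = volume (RR i0) :=
  measure_preimage_add_right volume _ _
lemma vol_KK : volume (KK i0) = volume (QQ i0) := by
  have h : KK i0 = -((fun z => EuclideanSpace.single i0 (aa + dd) + z) ⁻¹' QQ i0) := rfl
  rw [h]
  exact (Measure.measure_preimage_neg volume _).trans (measure_preimage_add volume _ _)

-- disjointness
lemma disj_I₁_KK : Disjoint (I₁ i0) (KK i0) := by
  rw [Set.disjoint_left]; intro y h1 h2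
  rw [mem_I₁] at h1; rw [mem_KK] at h2; linarith [h1.1, h2.2.1]

lemma disj_I₁_I₃ : Disjoint (I₁ i0) (I₃ i0) := by
  rw [Set.disjoint_left]; intro y h1 h2
  rw [mem_I₁] at h1; rw [mem_I₃] at h2
  have := aa_eq; linarith [h1.2.1, h2.1]

lemma disj_KK_I₃ : Disjoint (KK i0) (I₃ i0) := by
  rw [Set.disjoint_left]; intro y h1 h2
  rw [mem_KK] at h1; rw [mem_I₃] at h2
  have := aa_eq; have := dd_pos; linarith [h1.2.1, h2.1]

lemma disj_I₁_EE : Disjoint (I₁ i0) (EE i0) := by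
  rw [Set.disjoint_left]; intro y h1 h2
  rw [mem_I₁] at h1; linarith [h1.1, h2.2.1]

lemma disj_KK_EE : Disjoint (KK i0) (EE i0) := by
  rw [Set.disjoint_left]; intro y h1 h2
  rw [mem_KK] at h1; linarith [h1.2.2, h2.2.2.2]

lemma disj_I₃_EE : Disjoint (I₃ i0) (EE i0) := by
  rw [Set.disjoint_left]; intro y h1 h2
  rw [mem_I₃] at h1
  have := aa_eq; have := dd_pos; linarith [h1.1, h2.2.1]

-- coverage
lemma Bh_cover : Bh i0 ⊆ PP i0 ∪ QQ i0 ∪ RR i0 ∪ {x | x i0 = dd} := by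
  intro x hx
  obtain ⟨h0, hb⟩ := hx
  rcases lt_trichotomy (x i0) dd with h | h | h
  · exact Or.inl (Or.inl (Or.inl ⟨h0, h, hb⟩))
  · exact Or.inr h
  · rcases lt_or_ge (x i0) (2*dd) with h2 | h2
    · exact Or.inl (Or.inl (Or.inr ⟨h, h2, hb⟩))
    · exact Or.inl (Or.inr ⟨h2, hb⟩)

lemma Bb_cover : Bb i0 ⊆ Bh i0 ∪ (fun x => -x) ⁻¹' Bh i0 ∪ {x | x i0 = 0} := by
  intro x hx
  rcases lt_trichotomy 0 (x i0) with h | h | h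
  · exact Or.inl (Or.inl ⟨h, hx⟩)
  · exact Or.inr h.symm
  · refine Or.inl (Or.inr ?_)
    show -x ∈ Bh i0
    have hneg : (-x) i0 = -(x i0) := rfl
    refine ⟨by rw [hneg]; linarith, ?_⟩
    show ((-x) i0)^2 + sq i0 (-x) < 1/4
    rw [hneg, sq_neg, neg_sq]
    exact hx

lemma vol_hyper (c : ℝ) : volume {x : EuclideanSpace ℝ (Fin n) | x i0 = c} = 0 := by
  have e := EuclideanSpace.volume_preserving_symm_measurableEquiv_toLp (Fin n)
  have h : {x : EuclideanSpace ℝ (Fin n) | x i0 = c} =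
      (MeasurableEquiv.toLp 2 (Fin n → ℝ)).symm ⁻¹' {f : Fin n → ℝ | f i0 = c} := rfl
  rw [h, e.measure_preimage]
  · rw [volume_pi]
    exact Measure.pi_hyperplane (fun _ : Fin n => (volume : Measure ℝ)) i0 c
  · exact ((measurableSet_eq_fun (measurable_pi_apply i0) measurable_const)).nullMeasurableSet

lemma Bb_eq : Bb i0 = ball (0 : EuclideanSpace ℝ (Fin n)) (1/2) := by
  ext x
  simp only [Bb, Set.mem_setOf_eq, mem_ball_zero_iff]
  constructor <;> intro h
  · nlinarith [norm_nonneg x, norm_sq_eq i0 x]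
  · nlinarith [norm_nonneg x, norm_sq_eq i0 x]


lemma PP_sub_Bb : PP i0 ⊆ Bb i0 := fun x hx => hx.2.2
lemma QQ_sub_Bb : QQ i0 ⊆ Bb i0 := fun x hx => hx.2.2
lemma RR_sub_Bb : RR i0 ⊆ Bb i0 := fun x hx => hx.2

lemma EE_pos {i1 : Fin n} (h10 : i1 ≠ i0) : 0 < volume (EE i0) := by
  have h01 : i0 ≠ i1 := Ne.symm h10
  set r : ℝ := Real.sqrt (1/4 - dd^2) with hr
  have hd := dd_pos
  have hdh := dd_lt_half
  have hrsq : r^2 = 1/4 - dd^2 := Real.sq_sqrt (by nlinarith)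
  set U : Set (EuclideanSpace ℝ (Fin n)) :=
    {y | 1/2 < y i0 ∧ y i0 < aa ∧ 1/4 - (aa + dd - y i0)^2 < sq i0 y ∧
      (y i0 - aa)^2 + sq i0 y < 1/4} with hU
  have hUopen : IsOpen U := by
    have c1 : Continuous fun x : EuclideanSpace ℝ (Fin n) => x i0 :=
      (EuclideanSpace.proj (𝕜 := ℝ) i0).continuous
    have c2 := continuous_sq i0
    exact IsOpen.inter (isOpen_lt continuous_const c1)
      (IsOpen.inter (isOpen_lt c1 continuous_const)
        (IsOpen.inter
          (isOpen_lt (continuous_const.sub ((continuous_const.sub c1).pow 2)) c2)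
          (isOpen_lt (((c1.sub continuous_const).pow 2).add c2) continuous_const)))
  have hUsub : U ⊆ EE i0 := by
    rintro y ⟨h1, h2, h3, h4⟩
    exact ⟨h1, h2, h4, by linarith⟩
  have hne : U.Nonempty := by
    refine ⟨EuclideanSpace.single i0 (aa - dd/2) + EuclideanSpace.single i1 r, ?_⟩
    have hy0 : (EuclideanSpace.single i0 (aa - dd/2) + EuclideanSpace.single i1 r) i0
        = aa - dd/2 := by
      simp [PiLp.add_apply, EuclideanSpace.single_apply, h01]
    have hsq : sq i0 (EuclideanSpace.single i0 (aa - dd/2) + EuclideanSpace.single i1 r)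
        = r^2 := by
      unfold sq
      rw [Finset.sum_eq_single_of_mem i1 (Finset.mem_erase.mpr ⟨h10, Finset.mem_univ _⟩)]
      · simp [PiLp.add_apply, EuclideanSpace.single_apply, h10]
      · intro b hb hbne
        have hb0 : b ≠ i0 := Finset.ne_of_mem_erase hb
        simp [PiLp.add_apply, EuclideanSpace.single_apply, hb0, hbne]
    have ha := aa_eq
    refine ⟨by rw [hy0]; linarith, by rw [hy0]; linarith, ?_, ?_⟩
    · rw [hy0, hsq, hrsq]; nlinarith
    · rw [hy0, hsq, hrsq]; nlinarith
  exact (hUopen.measure_pos volume hne).trans_le (measure_mono hUsub)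


end
end LR14

open LR14 in
theorem stmt_14 (n : ℕ) (hn : 2 ≤ n) :
    ∃ S : Set (EuclideanSpace ℝ (Fin n)),
      MeasurableSet S ∧ S ⊆ closedBall 0 1 ∧
      (∀ x ∈ S, ∀ y ∈ S, dist x y ≠ 1) ∧
      (volume S).toReal >
        (1/2) ^ n * (volume (ball (0 : EuclideanSpace ℝ (Fin n)) 1)).toReal := by
  classical
  have hn0 : 0 < n := by omega
  set i0 : Fin n := ⟨0, hn0⟩ with hi0
  set i1 : Fin n := ⟨1, by omega⟩ with hi1
  have h10 : i1 ≠ i0 := by simp [hi0, hi1, Fin.ext_iff]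
  set S : Set (EuclideanSpace ℝ (Fin n)) := TT i0 ∪ (fun x => -x) ⁻¹' TT i0 with hS
  have hsub : S ⊆ closedBall 0 1 := by
    rintro x (hx | hx) <;> rw [mem_closedBall_zero_iff]
    · nlinarith [norm_nonneg x, norm_sq_eq i0 x, hx.2.2, sq_nonneg' i0 x]
    · have h := hx.2.2
      have : ‖x‖ = ‖-x‖ := (norm_neg x).symm
      rw [this]
      nlinarith [norm_nonneg (-x), norm_sq_eq i0 (-x), sq_nonneg' i0 (-x)]
  refine ⟨S, (meas_TT i0).union ((meas_TT i0).preimage measurable_neg), hsub, ?_, ?_⟩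
  · -- distances
    have inT : ∀ x ∈ TT i0, ∀ y ∈ TT i0, dist x y < 1 := by
      intro x hx y hy
      have h1 : dist x (EuclideanSpace.single i0 aa) < 1/2 := by
        rw [dist_eq_norm]
        nlinarith [norm_nonneg (x - EuclideanSpace.single i0 aa),
          norm_sub_single_sq i0 x aa, hx.2.1]
      have h2 : dist y (EuclideanSpace.single i0 aa) < 1/2 := by
        rw [dist_eq_norm]
        nlinarith [norm_nonneg (y - EuclideanSpace.single i0 aa),
          norm_sub_single_sq i0 y aa, hy.2.1]
      calc dist x y ≤ dist x (EuclideanSpace.single i0 aa)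
            + dist (EuclideanSpace.single i0 aa) y := dist_triangle _ _ _
        _ < 1 := by rw [dist_comm (EuclideanSpace.single i0 aa) y]; linarith
    have cross : ∀ x ∈ TT i0, ∀ y ∈ (fun x => -x) ⁻¹' TT i0, 1 < dist x y := by
      intro x hx y hy
      have hy1 : (1:ℝ)/2 < -(y i0) := hy.1
      have hx1 := hx.1
      have hcd := coord_dist i0 x y
      have h1 : 1 < x i0 - y i0 := by linarith
      have h2 : x i0 - y i0 ≤ |x i0 - y i0| := le_abs_self _
      linarith
    rintro x (hx | hx) y (hy | hy)
    · exact ne_of_lt (inT x hx y hy)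
    · exact ne_of_gt (cross x hx y hy)
    · rw [dist_comm]; exact ne_of_gt (cross y hy x hx)
    · have hd : dist x y = dist (-x) (-y) := (dist_neg_neg x y).symm
      rw [hd]; exact ne_of_lt (inT _ hx _ hy)
  · -- volume
    have hvol_ball : volume (Bb i0)
        = ENNReal.ofReal ((1/2:ℝ)^n) * volume (ball (0 : EuclideanSpace ℝ (Fin n)) 1) := by
      rw [Bb_eq i0, Measure.addHaar_ball_of_pos volume (0 : EuclideanSpace ℝ (Fin n))
        (by norm_num : (0:ℝ) < 1/2), finrank_euclideanSpace_fin]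
    have hBbfin : volume (Bb i0) < ⊤ := by
      rw [Bb_eq i0]; exact measure_ball_lt_top
    have hPfin := (measure_mono (PP_sub_Bb i0)).trans_lt hBbfin
    have hQfin := (measure_mono (QQ_sub_Bb i0)).trans_lt hBbfin
    have hRfin := (measure_mono (RR_sub_Bb i0)).trans_lt hBbfin
    -- lower bound for volume of TT
    have hd2 : Disjoint (I₁ i0 ∪ KK i0) (I₃ i0) :=
      Disjoint.union_left (disj_I₁_I₃ i0) (disj_KK_I₃ i0)
    have hd3 : Disjoint ((I₁ i0 ∪ KK i0) ∪ I₃ i0) (EE i0) :=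
      Disjoint.union_left (Disjoint.union_left (disj_I₁_EE i0) (disj_KK_EE i0)) (disj_I₃_EE i0)
    have hTTge : volume (PP i0) + volume (QQ i0) + volume (RR i0) + volume (EE i0)
        ≤ volume (TT i0) := by
      have hunion : volume (((I₁ i0 ∪ KK i0) ∪ I₃ i0) ∪ EE i0)
          = volume (PP i0) + volume (QQ i0) + volume (RR i0) + volume (EE i0) := by
        rw [measure_union hd3 (meas_EE i0), measure_union hd2 (meas_I₃ i0),
          measure_union (disj_I₁_KK i0) (meas_KK i0), vol_I₁, vol_KK, vol_I₃]
      rw [← hunion]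
      refine measure_mono ?_
      rintro x (((h | h) | h) | h)
      · exact I₁_subset i0 h
      · exact KK_subset i0 h
      · exact I₃_subset i0 h
      · exact EE_subset i0 h
    -- upper bound for Bh
    have hBh : volume (Bh i0) ≤ volume (PP i0) + volume (QQ i0) + volume (RR i0) := by
      calc volume (Bh i0) ≤ volume (PP i0 ∪ QQ i0 ∪ RR i0 ∪ {x | x i0 = dd}) :=
            measure_mono (Bh_cover i0)
        _ ≤ volume (PP i0 ∪ QQ i0 ∪ RR i0) + volume {x : EuclideanSpace ℝ (Fin n) | x i0 = dd} := measure_union_le _ _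
        _ ≤ (volume (PP i0 ∪ QQ i0) + volume (RR i0)) + 0 := by
            rw [vol_hyper i0 dd]; exact add_le_add_left (measure_union_le _ _) 0
        _ ≤ volume (PP i0) + volume (QQ i0) + volume (RR i0) := by
            rw [add_zero]; exact add_le_add_left (measure_union_le _ _) _
    -- Bb vs Bh
    have hnegBh : volume ((fun x : EuclideanSpace ℝ (Fin n) => -x) ⁻¹' Bh i0)
        = volume (Bh i0) := Measure.measure_preimage_neg volume (Bh i0)
    have hBb2 : volume (Bb i0) ≤ 2 * volume (Bh i0) := by
      calc volume (Bb i0)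
          ≤ volume (Bh i0 ∪ (fun x => -x) ⁻¹' Bh i0 ∪ {x | x i0 = 0}) :=
            measure_mono (Bb_cover i0)
        _ ≤ volume (Bh i0 ∪ (fun x => -x) ⁻¹' Bh i0) + volume {x : EuclideanSpace ℝ (Fin n) | x i0 = 0} :=
            measure_union_le _ _
        _ ≤ (volume (Bh i0) + volume ((fun x => -x) ⁻¹' Bh i0)) + 0 := by
            rw [vol_hyper i0 0]; exact add_le_add_left (measure_union_le _ _) 0
        _ = 2 * volume (Bh i0) := by rw [hnegBh, add_zero, two_mul]
    -- volume of S
    have hdisjS : Disjoint (TT i0) ((fun x : EuclideanSpace ℝ (Fin n) => -x) ⁻¹' TT i0) := by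
      rw [Set.disjoint_left]
      intro x hx hx'
      have h1 := hx.1
      have h2 : (1:ℝ)/2 < -(x i0) := hx'.1
      linarith
    have hnegTT : volume ((fun x : EuclideanSpace ℝ (Fin n) => -x) ⁻¹' TT i0)
        = volume (TT i0) := Measure.measure_preimage_neg volume (TT i0)
    have hSvol : volume S = 2 * volume (TT i0) := by
      rw [hS, measure_union hdisjS ((meas_TT i0).preimage measurable_neg), hnegTT, two_mul]
    -- strict chain
    have hEpos : 0 < volume (EE i0) := EE_pos i0 h10
    have hsumfin : volume (PP i0) + volume (QQ i0) + volume (RR i0) ≠ ⊤ := by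
      exact (ENNReal.add_lt_top.mpr ⟨ENNReal.add_lt_top.mpr ⟨hPfin, hQfin⟩, hRfin⟩).ne
    have main : ENNReal.ofReal ((1/2:ℝ)^n) * volume (ball (0 : EuclideanSpace ℝ (Fin n)) 1)
        < volume S := by
      rw [← hvol_ball, hSvol]
      calc volume (Bb i0) ≤ 2 * volume (Bh i0) := hBb2
        _ ≤ 2 * (volume (PP i0) + volume (QQ i0) + volume (RR i0)) :=
            mul_le_mul' le_rfl hBh
        _ < 2 * (volume (PP i0) + volume (QQ i0) + volume (RR i0) + volume (EE i0)) := by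
            refine ENNReal.mul_lt_mul_right (by norm_num) (by norm_num) ?_
            exact ENNReal.lt_add_right hsumfin hEpos.ne'
        _ ≤ 2 * volume (TT i0) := mul_le_mul' le_rfl hTTge
    have hSfin : volume S ≠ ⊤ :=
      ((measure_mono hsub).trans_lt measure_closedBall_lt_top).ne
    have hXfin : ENNReal.ofReal ((1/2:ℝ)^n)
        * volume (ball (0 : EuclideanSpace ℝ (Fin n)) 1) ≠ ⊤ :=
      ENNReal.mul_ne_top ENNReal.ofReal_ne_top measure_ball_lt_top.ne
    have hfinal := (ENNReal.toReal_lt_toReal hXfin hSfin).mpr main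
    rw [ENNReal.toReal_mul, ENNReal.toReal_ofReal (by positivity)] at hfinal
    exact hfinal
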